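/- In the block-random construction, for every u ∈ ℝ^p and every A ∈ ℝ^{m×n}: E‖A X u‖² = ‖A S Zᵀ u‖² + Σ_{l=1}^{q} ‖A D_{·J_l}‖_F² · ( ‖u_{K_l}‖² − ‖(Z Zᵀ)_{K_l K_l} u_{K_l}‖² ), where D_{·J} denotes the column submatrix of D indexed by J and ‖·‖_F denotes the Frobenius norm. -/

import Mathlib

open MeasureTheory ProbabilityTheory

private lemma mulVec_pair_sum {m n p : ℕ} (M : Matrix (Fin m) (Fin n) ℝ)
    (N : Matrix (Fin n) (Fin p) ℝ) (w : Fin p → ℝ) (i : Fin m) :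
    ((M * N).mulVec w) i = ∑ jk : Fin n × Fin p, M i jk.1 * w jk.2 * N jk.1 jk.2 := by
  simp only [Matrix.mulVec, dotProduct, Matrix.mul_apply, Finset.sum_mul,
    Fintype.sum_prod_type]
  rw [Finset.sum_comm]
  exact Finset.sum_congr rfl fun j _ => Finset.sum_congr rfl fun k _ => by ring

/-- In the block-random construction `X = S Zᵀ + D R (I − Z Zᵀ)`, for every
`u ∈ ℝ^p` and `A ∈ ℝ^{m×n}`:
`E‖A X u‖² = ‖A S Zᵀ u‖² + ∑_l ‖A D_{·J_l}‖_F² (‖u_{K_l}‖² − ‖(Z Zᵀ)_{K_l K_l} u_{K_l}‖²)`. -/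
theorem X_expectation
    (m n p q : ℕ)
    (Ω : Type*) [MeasurableSpace Ω] (μ : Measure Ω) [IsProbabilityMeasure μ]
    -- S has nonzero columns with pairwise disjoint supports
    (S : Matrix (Fin n) (Fin q) ℝ)
    (hScol : ∀ l, ∃ j, S j l ≠ 0)
    (hSdisj : ∀ l l' : Fin q, l ≠ l' → ∀ j, S j l = 0 ∨ S j l' = 0)
    -- Z has ℓ2-normalized columns with pairwise disjoint supports
    (Z : Matrix (Fin p) (Fin q) ℝ)
    (hZnorm : ∀ l, ∑ k, (Z k l) ^ 2 = 1)
    (hZdisj : ∀ l l' : Fin q, l ≠ l' → ∀ k, Z k l = 0 ∨ Z k l' = 0)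
    -- J l = supp(S_{·l})
    (J : Fin q → Finset (Fin n)) (hJ : ∀ l j, j ∈ J l ↔ S j l ≠ 0)
    -- K is a partition of [p] with supp(Z_{·l}) ⊆ K l
    (K : Fin q → Finset (Fin p))
    (hKdisj : ∀ l l', l ≠ l' → Disjoint (K l) (K l'))
    (hKcover : ∀ k, ∃ l, k ∈ K l)
    (hZsupp : ∀ l k, Z k l ≠ 0 → k ∈ K l)
    -- R is random, independent mean-zero variance-one entries on the blocks J_l × K_l,
    -- identically zero elsewhere
    (R : Ω → Matrix (Fin n) (Fin p) ℝ)
    (hRmeas : ∀ j k, Measurable (fun ω => R ω j k))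
    (hRindep : iIndepFun
        (fun jk : Fin n × Fin p => fun ω => R ω jk.1 jk.2) μ)
    (hRmean : ∀ l : Fin q, ∀ j ∈ J l, ∀ k ∈ K l, ∫ ω, R ω j k ∂μ = 0)
    (hRvar : ∀ l : Fin q, ∀ j ∈ J l, ∀ k ∈ K l, ∫ ω, (R ω j k) ^ 2 ∂μ = 1)
    (hRzero : ∀ j k, (∀ l : Fin q, j ∉ J l ∨ k ∉ K l) → ∀ ω, R ω j k = 0)
    -- D is diagonal
    (D : Matrix (Fin n) (Fin n) ℝ) (hDdiag : ∀ i j, i ≠ j → D i j = 0)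
    (A : Matrix (Fin m) (Fin n) ℝ)
    (u : Fin p → ℝ) :
    ∫ ω, ∑ i,
        (((A * (S * Z.transpose + D * R ω * (1 - Z * Z.transpose))).mulVec u) i) ^ 2 ∂μ
      = (∑ i, (((A * S * Z.transpose).mulVec u) i) ^ 2)
        + ∑ l, (∑ i, ∑ j ∈ J l, ((A * D) i j) ^ 2)
            * ((∑ k ∈ K l, (u k) ^ 2)
                - ∑ k ∈ K l, (∑ k' ∈ K l, (Z * Z.transpose) k k' * u k') ^ 2) := by
  classical
  set B : Matrix (Fin m) (Fin n) ℝ := A * D with hB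
  set v : Fin p → ℝ := (1 - Z * Z.transpose).mulVec u with hv
  set a : Fin m → ℝ := (A * S * Z.transpose).mulVec u with ha
  set c : Fin m → Fin n × Fin p → ℝ := fun i jk => B i jk.1 * v jk.2 with hc
  set W : Ω → Fin m → ℝ := fun ω i => ∑ jk : Fin n × Fin p, c i jk * R ω jk.1 jk.2 with hW
  set G : Finset (Fin n × Fin p) :=
    Finset.univ.filter (fun jk => ∃ l, jk.1 ∈ J l ∧ jk.2 ∈ K l) with hG
  -- R vanishes off G
  have hzero : ∀ jk : Fin n × Fin p, jk ∉ G → ∀ ω, R ω jk.1 jk.2 = 0 := by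
    intro jk hjk ω
    refine hRzero _ _ (fun l => ?_) ω
    by_contra h
    push_neg at h
    exact hjk (Finset.mem_filter.mpr ⟨Finset.mem_univ _, ⟨l, h.1, h.2⟩⟩)
  -- entries are in L²
  have hL2 : ∀ jk : Fin n × Fin p, MemLp (fun ω => R ω jk.1 jk.2) 2 μ := by
    intro jk
    by_cases hjk : jk ∈ G
    · obtain ⟨l, hj, hk⟩ := (Finset.mem_filter.mp hjk).2
      have hsq : Integrable (fun ω => (R ω jk.1 jk.2) ^ 2) μ := by
        by_contra h
        have := hRvar l _ hj _ hk
        rw [integral_undef h] at this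
        norm_num at this
      exact (memLp_two_iff_integrable_sq (hRmeas _ _).aestronglyMeasurable).mpr hsq
    · have he : (fun ω => R ω jk.1 jk.2) = fun _ => (0 : ℝ) :=
        funext fun ω => hzero jk hjk ω
      rw [he]; exact memLp_const 0
  have hint : ∀ jk : Fin n × Fin p, Integrable (fun ω => R ω jk.1 jk.2) μ :=
    fun jk => (hL2 jk).integrable one_le_two
  have hmean : ∀ jk : Fin n × Fin p, ∫ ω, R ω jk.1 jk.2 ∂μ = 0 := by
    intro jk
    by_cases hjk : jk ∈ G
    · obtain ⟨l, hj, hk⟩ := (Finset.mem_filter.mp hjk).2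
      exact hRmean l _ hj _ hk
    · have he : (fun ω => R ω jk.1 jk.2) = fun _ => (0 : ℝ) :=
        funext fun ω => hzero jk hjk ω
      rw [he]; simp
  have hprod : ∀ jk j'k' : Fin n × Fin p,
      Integrable (fun ω => R ω jk.1 jk.2 * R ω j'k'.1 j'k'.2) μ := by
    intro jk j'k'
    rcases eq_or_ne jk j'k' with rfl | hne
    · simpa [pow_two] using (hL2 jk).integrable_sq
    · exact (hRindep.indepFun hne).integrable_mul (hint jk) (hint j'k')
  have hcov : ∀ jk j'k' : Fin n × Fin p, jk ≠ j'k' →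
      ∫ ω, R ω jk.1 jk.2 * R ω j'k'.1 j'k'.2 ∂μ = 0 := by
    intro jk j'k' hne
    have h := (hRindep.indepFun hne).integral_mul_eq_mul_integral
      (hRmeas jk.1 jk.2).aestronglyMeasurable (hRmeas j'k'.1 j'k'.2).aestronglyMeasurable
    simp only [Pi.mul_apply] at h
    calc ∫ ω, R ω jk.1 jk.2 * R ω j'k'.1 j'k'.2 ∂μ
        = (∫ ω, R ω jk.1 jk.2 ∂μ) * ∫ ω, R ω j'k'.1 j'k'.2 ∂μ := h
      _ = 0 := by rw [hmean jk]; ring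
  have hvar' : ∀ jk : Fin n × Fin p,
      ∫ ω, R ω jk.1 jk.2 * R ω jk.1 jk.2 ∂μ = if jk ∈ G then 1 else 0 := by
    intro jk
    by_cases hjk : jk ∈ G
    · obtain ⟨l, hj, hk⟩ := (Finset.mem_filter.mp hjk).2
      have := hRvar l _ hj _ hk
      simp only [pow_two] at this
      rw [this, if_pos hjk]
    · have he : (fun ω => R ω jk.1 jk.2) = fun _ => (0 : ℝ) :=
        funext fun ω => hzero jk hjk ω
      rw [if_neg hjk]
      have : (fun ω => R ω jk.1 jk.2 * R ω jk.1 jk.2) = fun _ => (0 : ℝ) := by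
        funext ω; rw [hzero jk hjk ω]; ring
      rw [this]; simp
  -- pointwise rewriting of the integrand
  have hpt : ∀ ω i,
      ((A * (S * Z.transpose + D * R ω * (1 - Z * Z.transpose))).mulVec u) i
        = a i + W ω i := by
    intro ω i
    rw [Matrix.mul_add, Matrix.add_mulVec, Pi.add_apply]
    congr 1
    · rw [ha, Matrix.mul_assoc]
    · simp only [← Matrix.mul_assoc]
      rw [← Matrix.mulVec_mulVec, hW]
      simp only [← hv]
      exact mulVec_pair_sum (A * D) (R ω) v i
  -- per-coordinate expansion of the square
  have hexp : ∀ i ω, (a i + W ω i) ^ 2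
      = a i ^ 2 + (∑ jk : Fin n × Fin p, (2 * a i * c i jk) * R ω jk.1 jk.2)
        + ∑ jk : Fin n × Fin p, ∑ j'k' : Fin n × Fin p,
            (c i jk * c i j'k') * (R ω jk.1 jk.2 * R ω j'k'.1 j'k'.2) := by
    intro i ω
    have h2 : W ω i * W ω i = ∑ jk : Fin n × Fin p, ∑ j'k' : Fin n × Fin p,
        (c i jk * c i j'k') * (R ω jk.1 jk.2 * R ω j'k'.1 j'k'.2) := by
      rw [hW]
      rw [Finset.sum_mul_sum]
      exact Finset.sum_congr rfl fun jk _ => Finset.sum_congr rfl fun j'k' _ => by ring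
    have h1 : a i * W ω i = ∑ jk : Fin n × Fin p, (a i * c i jk) * R ω jk.1 jk.2 := by
      rw [hW, Finset.mul_sum]
      exact Finset.sum_congr rfl fun jk _ => by ring
    have : (a i + W ω i) ^ 2 = a i ^ 2 + 2 * (a i * W ω i) + W ω i * W ω i := by ring
    rw [this, h1, h2, Finset.mul_sum]
    congr 2
    exact Finset.sum_congr rfl fun jk _ => by ring
  -- integral of each coordinate
  have hI : ∀ i, ∫ ω, (a i + W ω i) ^ 2 ∂μ = a i ^ 2 + ∑ jk ∈ G, (c i jk) ^ 2 := by
    intro i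
    have int1 : Integrable (fun ω => ∑ jk : Fin n × Fin p,
        (2 * a i * c i jk) * R ω jk.1 jk.2) μ :=
      integrable_finset_sum _ fun jk _ => (hint jk).const_mul _
    have int2 : Integrable (fun ω => ∑ jk : Fin n × Fin p, ∑ j'k' : Fin n × Fin p,
        (c i jk * c i j'k') * (R ω jk.1 jk.2 * R ω j'k'.1 j'k'.2)) μ :=
      integrable_finset_sum _ fun jk _ =>
        integrable_finset_sum _ fun j'k' _ => (hprod jk j'k').const_mul _
    have he : (fun ω => (a i + W ω i) ^ 2)
        = fun ω => a i ^ 2 + (∑ jk : Fin n × Fin p, (2 * a i * c i jk) * R ω jk.1 jk.2)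
          + ∑ jk : Fin n × Fin p, ∑ j'k' : Fin n × Fin p,
              (c i jk * c i j'k') * (R ω jk.1 jk.2 * R ω j'k'.1 j'k'.2) :=
      funext fun ω => hexp i ω
    have ha1 : Integrable (fun ω => a i ^ 2
        + ∑ jk : Fin n × Fin p, (2 * a i * c i jk) * R ω jk.1 jk.2) μ :=
      (integrable_const _).add int1
    rw [he, integral_add ha1 int2, integral_add (integrable_const (a i ^ 2)) int1]
    have e0 : ∫ _ω, a i ^ 2 ∂μ = a i ^ 2 := by simp
    have e1 : ∫ ω, ∑ jk : Fin n × Fin p, (2 * a i * c i jk) * R ω jk.1 jk.2 ∂μ = 0 := by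
      rw [integral_finset_sum _ fun jk _ => (hint jk).const_mul _]
      refine Finset.sum_eq_zero fun jk _ => ?_
      rw [integral_const_mul, hmean jk, mul_zero]
    have e2 : ∫ ω, ∑ jk : Fin n × Fin p, ∑ j'k' : Fin n × Fin p,
        (c i jk * c i j'k') * (R ω jk.1 jk.2 * R ω j'k'.1 j'k'.2) ∂μ
        = ∑ jk ∈ G, (c i jk) ^ 2 := by
      rw [integral_finset_sum _ fun jk _ =>
        integrable_finset_sum _ fun j'k' _ => (hprod jk j'k').const_mul _]
      have : ∀ jk ∈ Finset.univ (α := Fin n × Fin p),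
          ∫ ω, ∑ j'k' : Fin n × Fin p,
            (c i jk * c i j'k') * (R ω jk.1 jk.2 * R ω j'k'.1 j'k'.2) ∂μ
          = if jk ∈ G then (c i jk) ^ 2 else 0 := by
        intro jk _
        rw [integral_finset_sum _ fun j'k' _ => (hprod jk j'k').const_mul _]
        rw [Finset.sum_eq_single jk]
        · rw [integral_const_mul, hvar' jk]
          by_cases hjk : jk ∈ G <;> simp [hjk] <;> ring
        · intro j'k' _ hne
          rw [integral_const_mul, hcov jk j'k' (Ne.symm hne), mul_zero]
        · simp
      rw [Finset.sum_congr rfl this, Finset.sum_ite_mem]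
      simp [Finset.sum_filter, hG]
    rw [e0, e1, e2, add_zero]
  -- total expectation
  have htotal : ∫ ω, ∑ i,
      (((A * (S * Z.transpose + D * R ω * (1 - Z * Z.transpose))).mulVec u) i) ^ 2 ∂μ
      = (∑ i, a i ^ 2) + ∑ i, ∑ jk ∈ G, (c i jk) ^ 2 := by
    have hre : (fun ω => ∑ i,
        (((A * (S * Z.transpose + D * R ω * (1 - Z * Z.transpose))).mulVec u) i) ^ 2)
        = fun ω => ∑ i, (a i + W ω i) ^ 2 :=
      funext fun ω => Finset.sum_congr rfl fun i _ => by rw [hpt ω i]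
    rw [hre]
    have hiint : ∀ i, Integrable (fun ω => (a i + W ω i) ^ 2) μ := by
      intro i
      rw [funext fun ω => hexp i ω]
      exact ((integrable_const _).add
        (integrable_finset_sum _ fun jk _ => (hint jk).const_mul _)).add
        (integrable_finset_sum _ fun jk _ =>
          integrable_finset_sum _ fun j'k' _ => (hprod jk j'k').const_mul _)
    rw [integral_finset_sum _ fun i _ => hiint i]
    rw [Finset.sum_congr rfl fun i _ => hI i, Finset.sum_add_distrib]
  rw [htotal]
  -- combinatorial splitting of G into blocks
  have hJdisj : ∀ l l' : Fin q, l ≠ l' → Disjoint (J l) (J l') := by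
    intro l l' hll'
    rw [Finset.disjoint_left]
    intro j hj hj'
    rcases hSdisj l l' hll' j with h | h
    · exact (hJ l j).mp hj h
    · exact (hJ l' j).mp hj' h
  have hGeq : G = Finset.univ.biUnion fun l => (J l) ×ˢ (K l) := by
    ext jk
    simp [hG, Finset.mem_product]
  have hsplit : ∑ i, ∑ jk ∈ G, (c i jk) ^ 2
      = ∑ l, (∑ i, ∑ j ∈ J l, (B i j) ^ 2) * (∑ k ∈ K l, (v k) ^ 2) := by
    have hpd : Set.PairwiseDisjoint (↑(Finset.univ : Finset (Fin q)))
        (fun l => (J l) ×ˢ (K l)) := by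
      intro l _ l' _ hll'
      rw [Function.onFun, Finset.disjoint_left]
      rintro ⟨j, k⟩ hjk hjk'
      rw [Finset.mem_product] at hjk hjk'
      exact Finset.disjoint_left.mp (hJdisj l l' hll') hjk.1 hjk'.1
    calc ∑ i, ∑ jk ∈ G, (c i jk) ^ 2
        = ∑ i, ∑ l, ∑ jk ∈ (J l) ×ˢ (K l), (c i jk) ^ 2 :=
          Finset.sum_congr rfl fun i _ => by rw [hGeq, Finset.sum_biUnion hpd]
      _ = ∑ l, ∑ i, ∑ jk ∈ (J l) ×ˢ (K l), (c i jk) ^ 2 := Finset.sum_comm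
      _ = ∑ l, (∑ i, ∑ j ∈ J l, (B i j) ^ 2) * (∑ k ∈ K l, (v k) ^ 2) := by
          refine Finset.sum_congr rfl fun l _ => ?_
          rw [Finset.sum_mul]
          refine Finset.sum_congr rfl fun i _ => ?_
          calc ∑ jk ∈ (J l) ×ˢ (K l), (c i jk) ^ 2
              = ∑ j ∈ J l, ∑ k ∈ K l, (B i j) ^ 2 * (v k) ^ 2 := by
                rw [Finset.sum_product]
                exact Finset.sum_congr rfl fun j _ => Finset.sum_congr rfl fun k _ => by
                  simp only [hc]; ring
            _ = (∑ j ∈ J l, (B i j) ^ 2) * (∑ k ∈ K l, (v k) ^ 2) :=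
                (Finset.sum_mul_sum _ _ _ _).symm
  have hvK : ∀ l, ∑ k ∈ K l, (v k) ^ 2
      = (∑ k ∈ K l, (u k) ^ 2)
        - ∑ k ∈ K l, (∑ k' ∈ K l, (Z * Z.transpose) k k' * u k') ^ 2 := by
    intro l
    have hZoff : ∀ k, k ∉ K l → Z k l = 0 := fun k hk => by
      by_contra h; exact hk (hZsupp l k h)
    have hZcross : ∀ k ∈ K l, ∀ l', l' ≠ l → Z k l' = 0 := by
      intro k hk l' hl'
      by_contra h
      exact Finset.disjoint_left.mp (hKdisj l' l hl') (hZsupp l' k h) hk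
    set cl : ℝ := ∑ k' ∈ K l, Z k' l * u k' with hcl
    have hZZ : ∀ k ∈ K l, ∀ k', (Z * Z.transpose) k k' = Z k l * Z k' l := by
      intro k hk k'
      rw [Matrix.mul_apply, Finset.sum_eq_single l]
      · rw [Matrix.transpose_apply]
      · intro l'' _ hne
        rw [hZcross k hk l'' hne, zero_mul]
      · intro h; exact absurd (Finset.mem_univ l) h
    have hsum_univ : ∀ f : Fin p → ℝ, (∀ k ∉ K l, f k = 0) → ∑ k', f k' = ∑ k' ∈ K l, f k' := by
      intro f hf
      exact (Finset.sum_subset (Finset.subset_univ (K l)) (fun k _ hk => hf k hk)).symm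
    have hrowK : ∀ k ∈ K l, ∑ k' ∈ K l, (Z * Z.transpose) k k' * u k' = Z k l * cl := by
      intro k hk
      rw [hcl, Finset.mul_sum]
      exact Finset.sum_congr rfl fun k' _ => by rw [hZZ k hk k']; ring
    have hvk : ∀ k ∈ K l, v k = u k - Z k l * cl := by
      intro k hk
      rw [hv, Matrix.sub_mulVec, Matrix.one_mulVec, Pi.sub_apply]
      congr 1
      have h0 : ((Z * Z.transpose).mulVec u) k = ∑ k', (Z * Z.transpose) k k' * u k' := rfl
      rw [h0, hsum_univ _ (fun k' hk' => by rw [hZZ k hk k', hZoff k' hk']; ring),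
        hrowK k hk]
    have hnorm1 : ∑ k ∈ K l, (Z k l) ^ 2 = 1 := by
      rw [← hZnorm l]
      exact (hsum_univ _ (fun k hk => by rw [hZoff k hk]; ring)).symm
    have hZu : ∑ k ∈ K l, Z k l * u k = cl := by rw [hcl]
    calc ∑ k ∈ K l, (v k) ^ 2
        = ∑ k ∈ K l, ((u k) ^ 2 - (2 * cl) * (Z k l * u k) + cl ^ 2 * (Z k l) ^ 2) :=
          Finset.sum_congr rfl fun k hk => by rw [hvk k hk]; ring
      _ = ((∑ k ∈ K l, (u k) ^ 2) - (2 * cl) * (∑ k ∈ K l, Z k l * u k))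
            + cl ^ 2 * ∑ k ∈ K l, (Z k l) ^ 2 := by
          rw [Finset.sum_add_distrib, Finset.sum_sub_distrib, ← Finset.mul_sum,
            ← Finset.mul_sum]
      _ = (∑ k ∈ K l, (u k) ^ 2) - cl ^ 2 := by rw [hZu, hnorm1]; ring
      _ = (∑ k ∈ K l, (u k) ^ 2)
            - ∑ k ∈ K l, (∑ k' ∈ K l, (Z * Z.transpose) k k' * u k') ^ 2 := by
          have hback : ∑ k ∈ K l, (∑ k' ∈ K l, (Z * Z.transpose) k k' * u k') ^ 2
              = cl ^ 2 := by
            calc ∑ k ∈ K l, (∑ k' ∈ K l, (Z * Z.transpose) k k' * u k') ^ 2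
                = ∑ k ∈ K l, cl ^ 2 * (Z k l) ^ 2 :=
                  Finset.sum_congr rfl fun k hk => by rw [hrowK k hk]; ring
              _ = cl ^ 2 := by rw [← Finset.mul_sum, hnorm1, mul_one]
          rw [hback]
  rw [hsplit]
  congr 1
  exact Finset.sum_congr rfl fun l _ => by rw [hvK l]
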